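/- Let d ≥ 3 and let G be any d-regular graph on n vertices. Then q*(G) ≤ λ(G)/d, where λ(G) = max(|λ₂|, |λ_n|) and λ₁ ≥ λ₂ ≥ … ≥ λ_n are the eigenvalues of the adjacency matrix of G. -/

import Mathlib

open Finset

noncomputable section

variable {V : Type*} [Fintype V] [DecidableEq V]

/-- The number of edges of `G` with both endpoints in the set `A`, as a real number
(ordered adjacent pairs inside `A`, divided by two). -/
noncomputable def edgesIn (G : SimpleGraph V) (A : Finset V) : ℝ :=
  (Nat.card {p : V × V // G.Adj p.1 p.2 ∧ p.1 ∈ A ∧ p.2 ∈ A} : ℝ) / 2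

/-- The number of edges of `G`, as a real number. -/
noncomputable def edgeCount (G : SimpleGraph V) : ℝ := (Nat.card G.edgeSet : ℝ)

/-- The degree of a vertex, as a real number. -/
noncomputable def degR (G : SimpleGraph V) (v : V) : ℝ := (Nat.card (G.neighborSet v) : ℝ)

/-- The modularity `q_𝒜(G)` of a partition `𝒜` of the vertex set of `G`. -/
noncomputable def modularityOf (G : SimpleGraph V)
    (P : Finpartition (Finset.univ : Finset V)) : ℝ :=
  ∑ A ∈ P.parts,
    (edgesIn G A / edgeCount G - (∑ v ∈ A, degR G v) ^ 2 / (4 * edgeCount G ^ 2))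

/-- The modularity `q*(G)`: the maximum of `q_𝒜(G)` over all partitions `𝒜` of `V(G)`. -/
noncomputable def modularity (G : SimpleGraph V) : ℝ :=
  sSup {q : ℝ | ∃ P : Finpartition (Finset.univ : Finset V), q = modularityOf G P}

open Matrix in
/-- Gershgorin bound: every eigenvalue of a `d`-regular graph has absolute value at most `d`. -/
lemma gersh_aux (G : SimpleGraph V) [DecidableRel G.Adj] (d : ℕ)
    (hreg : G.IsRegularOfDegree d) (hA : (G.adjMatrix ℝ).IsHermitian) (i : V) :
    |hA.eigenvalues i| ≤ (d : ℝ) := by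
  have hspec := hA.eigenvalues_mem_spectrum_real i
  have heig : Module.End.HasEigenvalue (Matrix.toLin' (G.adjMatrix ℝ)) (hA.eigenvalues i) := by
    rw [Module.End.hasEigenvalue_iff_mem_spectrum]
    rwa [show Matrix.toLin' (G.adjMatrix ℝ) = Matrix.toLinAlgEquiv' (G.adjMatrix ℝ) from rfl,
      AlgEquiv.spectrum_eq Matrix.toLinAlgEquiv' (G.adjMatrix ℝ)]
  obtain ⟨k, hk⟩ := eigenvalue_mem_ball heig
  rw [Metric.mem_closedBall] at hk
  have h1 : (G.adjMatrix ℝ) k k = 0 := by simp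
  have h2 : ∑ j ∈ Finset.univ.erase k, ‖(G.adjMatrix ℝ) k j‖ = (d : ℝ) := by
    rw [Finset.sum_erase _ (by simp)]
    have : ∀ j, ‖(G.adjMatrix ℝ) k j‖ = if G.Adj k j then (1:ℝ) else 0 := by
      intro j; by_cases h : G.Adj k j <;> simp [h]
    simp only [this, Finset.sum_boole]
    rw [← SimpleGraph.neighborFinset_eq_filter, SimpleGraph.card_neighborFinset_eq_degree, hreg k]
  rw [h1, h2, dist_zero_right, Real.norm_eq_abs] at hk
  exact hk

open Matrix in
/-- Key spectral inequality: for a `d`-regular graph whose adjacency matrix has at most one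
eigenvalue exceeding `lam` (and all eigenvalues at most `d`), the quadratic form of the adjacency
matrix is bounded by `(d/n)(∑ x)² + lam ∑ x²`. -/
lemma keyQuad (G : SimpleGraph V) [DecidableRel G.Adj] (d : ℕ)
    (hreg : G.IsRegularOfDegree d) (hA : (G.adjMatrix ℝ).IsHermitian) (lam : ℝ)
    (hlam : 0 ≤ lam)
    (H1 : ∀ i, hA.eigenvalues i ≤ (d : ℝ))
    (H2 : ∀ i j, lam < hA.eigenvalues i → lam < hA.eigenvalues j → i = j)
    (x : V → ℝ) :
    x ⬝ᵥ (G.adjMatrix ℝ *ᵥ x) ≤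
      ((d : ℝ) / (Fintype.card V : ℝ)) * (∑ v, x v) ^ 2 + lam * ∑ v, (x v) ^ 2 := by
  rcases isEmpty_or_nonempty V with hV | hV
  · simp [dotProduct]
  set A := G.adjMatrix ℝ with hAdef
  set ev := hA.eigenvalues with hev
  set U : Matrix V V ℝ := (hA.eigenvectorUnitary : Matrix V V ℝ) with hUdef
  have hstar : star U = Uᵀ := by
    rw [Matrix.star_eq_conjTranspose, Matrix.conjTranspose_eq_transpose_of_trivial]
  have hU1 : U * Uᵀ = 1 := by
    rw [← hstar]; exact (Matrix.mem_unitaryGroup_iff).mp hA.eigenvectorUnitary.2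
  have hU2 : Uᵀ * U = 1 := by
    rw [← hstar]; exact (Matrix.mem_unitaryGroup_iff').mp hA.eigenvectorUnitary.2
  have hspec : A = U * Matrix.diagonal ev * Uᵀ := by
    have := hA.spectral_theorem
    rwa [show (RCLike.ofReal ∘ hA.eigenvalues : V → ℝ) = ev by ext i; simp; rfl,
      Unitary.conjStarAlgAut_apply, ← hUdef, hstar] at this
  set c : V → ℝ := Uᵀ *ᵥ x with hc
  set t : V → ℝ := Uᵀ *ᵥ (fun _ => 1) with ht
  -- preserved dot products
  have hpres : ∀ y z : V → ℝ, (Uᵀ *ᵥ y) ⬝ᵥ (Uᵀ *ᵥ z) = y ⬝ᵥ z := by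
    intro y z
    rw [dotProduct_mulVec, vecMul_transpose, mulVec_mulVec, hU1, one_mulVec]
  -- quadratic form
  have hquad : x ⬝ᵥ (A *ᵥ x) = ∑ i, ev i * (c i) ^ 2 := by
    rw [hspec, ← mulVec_mulVec, ← mulVec_mulVec, dotProduct_mulVec (v := x) (A := U),
      ← mulVec_transpose, ← hc]
    simp only [dotProduct, mulVec_diagonal]
    exact Finset.sum_congr rfl fun i _ => by ring
  have hsum : ∑ v, x v = c ⬝ᵥ t := by
    rw [hc, ht, hpres]
    simp [dotProduct]
  have hsq : ∑ v, (x v) ^ 2 = ∑ i, (c i) ^ 2 := by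
    have := hpres x x
    rw [← hc] at this
    simp only [dotProduct] at this
    calc ∑ v, x v ^ 2 = ∑ v, x v * x v := by simp [sq]
    _ = ∑ i, c i * c i := this.symm
    _ = ∑ i, c i ^ 2 := by simp [sq]
  have htsq : ∑ i, (t i) ^ 2 = (Fintype.card V : ℝ) := by
    have := hpres (fun _ => (1:ℝ)) (fun _ => (1:ℝ))
    rw [← ht] at this
    simp only [dotProduct, mul_one] at this
    calc ∑ i, t i ^ 2 = ∑ i, t i * t i := by simp [sq]
    _ = (Fintype.card V : ℝ) := by rw [this]; simp
  -- eigen equation for ones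
  have hones : A *ᵥ (fun _ => (1:ℝ)) = fun _ => (d : ℝ) := by
    funext v
    rw [hAdef]
    rw [SimpleGraph.adjMatrix_mulVec_apply]
    simp [hreg v]
  have heig : ∀ i, ev i * t i = (d : ℝ) * t i := by
    have h1 : Matrix.diagonal ev *ᵥ t = (d : ℝ) • t := by
      have h2 : Uᵀ *ᵥ (A *ᵥ (fun _ => (1:ℝ))) = Matrix.diagonal ev *ᵥ t := by
        rw [hspec, ← mulVec_mulVec, ← mulVec_mulVec, mulVec_mulVec (M := Uᵀ) (N := U), hU2,
          one_mulVec, ← ht]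
      have h3 : Uᵀ *ᵥ (A *ᵥ (fun _ => (1:ℝ))) = (d : ℝ) • t := by
        rw [hones, ht, show (fun _ => (d:ℝ)) = (d : ℝ) • (fun _ => (1:ℝ)) by funext v; simp,
          Matrix.mulVec_smul]
      rw [← h2, h3]
    intro i
    have := congrFun h1 i
    rwa [mulVec_diagonal] at this
  rw [hquad, hsum, hsq]
  have hn0 : (0:ℝ) < (Fintype.card V : ℝ) := by
    exact_mod_cast Fintype.card_pos
  by_cases hall : ∀ i, ev i ≤ lam
  · have h1 : ∑ i, ev i * c i ^ 2 ≤ lam * ∑ i, c i ^ 2 := by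
      rw [Finset.mul_sum]
      exact Finset.sum_le_sum fun i _ => mul_le_mul_of_nonneg_right (hall i) (sq_nonneg _)
    have h2 : (0:ℝ) ≤ ((d : ℝ) / (Fintype.card V : ℝ)) * (c ⬝ᵥ t) ^ 2 := by positivity
    linarith
  · push_neg at hall
    obtain ⟨i₀, hi₀⟩ := hall
    have huniq : ∀ i, i ≠ i₀ → ev i ≤ lam := by
      intro i hne
      by_contra h'
      push_neg at h'
      exact hne (H2 i i₀ h' hi₀)
    have hld : lam < (d : ℝ) := lt_of_lt_of_le hi₀ (H1 i₀)
    have ht0 : ∀ i, i ≠ i₀ → t i = 0 := by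
      intro i hne
      by_contra h'
      have hevd : ev i = (d : ℝ) := mul_right_cancel₀ h' (heig i)
      exact hne (H2 i i₀ (hevd ▸ hld) hi₀)
    have hct : c ⬝ᵥ t = c i₀ * t i₀ := by
      rw [dotProduct]
      exact Finset.sum_eq_single_of_mem i₀ (Finset.mem_univ i₀)
        (fun i _ hne => by rw [ht0 i hne, mul_zero])
    have htn : t i₀ ^ 2 = (Fintype.card V : ℝ) := by
      have h := Finset.sum_eq_single_of_mem (f := fun i => t i ^ 2) i₀ (Finset.mem_univ i₀)
        (fun i _ hne => by simp [ht0 i hne])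
      rw [← h, htsq]
    have hrhs : ((d : ℝ) / (Fintype.card V : ℝ)) * (c ⬝ᵥ t) ^ 2 = (d : ℝ) * c i₀ ^ 2 := by
      rw [hct, mul_pow, htn]
      field_simp
    rw [hrhs]
    have hsplit : ∑ i, ev i * c i ^ 2
        = ev i₀ * c i₀ ^ 2 + ∑ i ∈ Finset.univ.erase i₀, ev i * c i ^ 2 :=
      (Finset.add_sum_erase _ (fun i => ev i * c i ^ 2) (Finset.mem_univ i₀)).symm
    have hb1 : ev i₀ * c i₀ ^ 2 ≤ (d : ℝ) * c i₀ ^ 2 :=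
      mul_le_mul_of_nonneg_right (H1 i₀) (sq_nonneg _)
    have hb2 : ∑ i ∈ Finset.univ.erase i₀, ev i * c i ^ 2
        ≤ lam * ∑ i, c i ^ 2 := by
      calc ∑ i ∈ Finset.univ.erase i₀, ev i * c i ^ 2
          ≤ ∑ i ∈ Finset.univ.erase i₀, lam * c i ^ 2 :=
            Finset.sum_le_sum fun i hi =>
              mul_le_mul_of_nonneg_right (huniq i (Finset.ne_of_mem_erase hi)) (sq_nonneg _)
        _ ≤ ∑ i, lam * c i ^ 2 :=
            Finset.sum_le_sum_of_subset_of_nonneg (Finset.erase_subset _ _)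
              (fun i _ _ => by positivity)
        _ = lam * ∑ i, c i ^ 2 := by rw [Finset.mul_sum]
    linarith

lemma degR_eq_aux (G : SimpleGraph V) [DecidableRel G.Adj] {d : ℕ}
    (hreg : G.IsRegularOfDegree d) (v : V) : degR G v = d := by
  unfold degR
  rw [Nat.card_eq_fintype_card, SimpleGraph.card_neighborSet_eq_degree, hreg v]

lemma edgeCount_eq_aux (G : SimpleGraph V) [DecidableRel G.Adj] {d : ℕ}
    (hreg : G.IsRegularOfDegree d) :
    2 * edgeCount G = (Fintype.card V : ℝ) * d := by
  unfold edgeCount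
  rw [Nat.card_eq_fintype_card, ← SimpleGraph.edgeFinset_card]
  have h := SimpleGraph.sum_degrees_eq_twice_card_edges G
  have h2 : ∑ v : V, G.degree v = Fintype.card V * d := by
    simp [hreg _, Finset.sum_const, Finset.card_univ, Nat.mul_comm]
  rw [h2] at h
  exact_mod_cast h.symm

lemma indicator_sum_aux (A : Finset V) :
    ∑ v : V, (if v ∈ A then (1:ℝ) else 0) = (A.card : ℝ) := by
  simp

lemma indicator_sq_sum_aux (A : Finset V) :
    ∑ v : V, (if v ∈ A then (1:ℝ) else 0) ^ 2 = (A.card : ℝ) := by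
  have : ∀ v : V, (if v ∈ A then (1:ℝ) else 0) ^ 2 = if v ∈ A then (1:ℝ) else 0 := by
    intro v; by_cases h : v ∈ A <;> simp [h]
  rw [Finset.sum_congr rfl fun v _ => this v]
  simp

open Matrix in
lemma edgesIn_eq_aux (G : SimpleGraph V) [DecidableRel G.Adj] (A : Finset V) :
    edgesIn G A = ((fun v => if v ∈ A then (1:ℝ) else 0) ⬝ᵥ
      (G.adjMatrix ℝ *ᵥ fun v => if v ∈ A then (1:ℝ) else 0)) / 2 := by
  unfold edgesIn
  congr 1
  rw [Nat.card_eq_fintype_card, Fintype.card_subtype, SimpleGraph.dotProduct_mulVec_adjMatrix]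
  rw [Finset.card_filter]
  push_cast
  rw [Fintype.sum_prod_type]
  refine Finset.sum_congr rfl fun i _ => Finset.sum_congr rfl fun j _ => ?_
  by_cases h1 : G.Adj i j <;> by_cases h2 : i ∈ A <;> by_cases h3 : j ∈ A <;> simp [h1, h2, h3]

open Matrix in
lemma modularityOf_le_aux (G : SimpleGraph V) [DecidableRel G.Adj] (d : ℕ) (hd : 0 < d)
    (hreg : G.IsRegularOfDegree d) (hA : (G.adjMatrix ℝ).IsHermitian) (lam : ℝ)
    (hlam : 0 ≤ lam)
    (H1 : ∀ i, hA.eigenvalues i ≤ (d : ℝ))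
    (H2 : ∀ i j, lam < hA.eigenvalues i → lam < hA.eigenvalues j → i = j)
    (P : Finpartition (Finset.univ : Finset V)) :
    modularityOf G P ≤ lam / d := by
  have hd' : (0:ℝ) < d := by exact_mod_cast hd
  rcases isEmpty_or_nonempty V with hV | hV
  · have hparts : P.parts = ∅ := by
      rw [Finset.eq_empty_iff_forall_notMem]
      intro B hB
      obtain ⟨v, _⟩ := P.nonempty_of_mem_parts hB
      exact IsEmpty.false v
    unfold modularityOf
    rw [hparts, Finset.sum_empty]
    positivity
  · have hn : (0:ℝ) < (Fintype.card V : ℝ) := by exact_mod_cast Fintype.card_pos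
    set n : ℝ := (Fintype.card V : ℝ) with hndef
    have hm : 2 * edgeCount G = n * d := edgeCount_eq_aux G hreg
    have hm' : edgeCount G = n * d / 2 := by linarith
    unfold modularityOf
    have hterm : ∀ B ∈ P.parts,
        edgesIn G B / edgeCount G - (∑ v ∈ B, degR G v) ^ 2 / (4 * edgeCount G ^ 2)
          ≤ lam * B.card / (n * d) := by
      intro B _
      have hkey := keyQuad G d hreg hA lam hlam H1 H2 (fun v => if v ∈ B then (1:ℝ) else 0)
      rw [indicator_sum_aux, indicator_sq_sum_aux] at hkey
      set q : ℝ := (fun v => if v ∈ B then (1:ℝ) else 0) ⬝ᵥ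
        (G.adjMatrix ℝ *ᵥ fun v => if v ∈ B then (1:ℝ) else 0) with hq
      set a : ℝ := (B.card : ℝ) with ha
      have hdeg : ∑ v ∈ B, degR G v = (d:ℝ) * a := by
        rw [Finset.sum_congr rfl fun v _ => degR_eq_aux G hreg v, Finset.sum_const, ha]
        simp [mul_comm]
      rw [edgesIn_eq_aux, hdeg, hm', ← hq]
      have goalEq : q / 2 / (n * d / 2) - ((d:ℝ) * a) ^ 2 / (4 * (n * d / 2) ^ 2)
          = q / (n * d) - a ^ 2 / n ^ 2 := by
        field_simp
        ring
      rw [goalEq]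
      have h2 : q / (n * d) ≤ (((d:ℝ) / n) * a ^ 2 + lam * a) / (n * d) :=
        (div_le_div_iff_of_pos_right (by positivity)).mpr hkey
      have h3 : (((d:ℝ) / n) * a ^ 2 + lam * a) / (n * d) = a ^ 2 / n ^ 2 + lam * a / (n * d) := by
        field_simp
      linarith [h2, h3.symm.le]
    calc ∑ B ∈ P.parts,
          (edgesIn G B / edgeCount G - (∑ v ∈ B, degR G v) ^ 2 / (4 * edgeCount G ^ 2))
        ≤ ∑ B ∈ P.parts, lam * B.card / (n * d) := Finset.sum_le_sum hterm
      _ = (lam / (n * d)) * ∑ B ∈ P.parts, (B.card : ℝ) := by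
          rw [Finset.mul_sum]
          exact Finset.sum_congr rfl fun B _ => by ring
      _ = (lam / (n * d)) * n := by
          congr 1
          rw [← Nat.cast_sum, P.sum_card_parts, Finset.card_univ]
      _ = lam / d := by
          field_simp

/-- if `G` is a `d`-regular graph (`d ≥ 3`) on `n` vertices and
`μ 1 ≥ μ 2 ≥ … ≥ μ n` is the (weakly decreasing) enumeration of the eigenvalues of the
adjacency matrix of `G` (with multiplicity), then `q*(G) ≤ max(|μ 2|, |μ n|)/d`. -/
theorem statement2 (G : SimpleGraph V) [DecidableRel G.Adj] (d n : ℕ) (hd : 3 ≤ d)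
    (hreg : G.IsRegularOfDegree d) (hn : n = Fintype.card V)
    (hA : (G.adjMatrix ℝ).IsHermitian) (μ : ℕ → ℝ)
    (hsorted : AntitoneOn μ (Set.Icc 1 n))
    (henum : ∃ e : V ≃ Fin n, ∀ v : V, hA.eigenvalues v = μ ((e v : ℕ) + 1)) :
    modularity G ≤ max |μ 2| |μ n| / d := by
  obtain ⟨e, he⟩ := henum
  set lam : ℝ := max |μ 2| |μ n| with hlamdef
  have hlam : 0 ≤ lam := le_trans (abs_nonneg _) (le_max_left _ _)
  have hd0 : 0 < d := by omega
  have hd' : (0:ℝ) < d := by exact_mod_cast hd0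
  have H1 : ∀ i, hA.eigenvalues i ≤ (d : ℝ) := fun i =>
    le_of_abs_le (gersh_aux G d hreg hA i)
  have H2 : ∀ i j, lam < hA.eigenvalues i → lam < hA.eigenvalues j → i = j := by
    intro i j hi hj
    by_contra hne
    have hij : ((e i : Fin n) : ℕ) ≠ ((e j : Fin n) : ℕ) := by
      intro h
      exact hne (e.injective (Fin.val_injective h))
    have hiN := (e i).2
    have hjN := (e j).2
    have hn2 : 2 ≤ n := by omega
    have hbound : ∀ k : V, 1 ≤ ((e k : Fin n) : ℕ) → hA.eigenvalues k ≤ lam := by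
      intro k hk
      have hkN := (e k).2
      have h2 : μ (((e k : Fin n) : ℕ) + 1) ≤ μ 2 :=
        hsorted ⟨by omega, by omega⟩ ⟨by omega, by omega⟩ (by omega)
      calc hA.eigenvalues k = μ (((e k : Fin n) : ℕ) + 1) := he k
        _ ≤ μ 2 := h2
        _ ≤ |μ 2| := le_abs_self _
        _ ≤ lam := le_max_left _ _
    rcases Nat.eq_zero_or_pos ((e i : Fin n) : ℕ) with h0 | h1
    · have h1' : 1 ≤ ((e j : Fin n) : ℕ) := by omega
      exact absurd (hbound j h1') (not_le.mpr hj)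
    · exact absurd (hbound i h1) (not_le.mpr hi)
  unfold modularity
  apply Real.sSup_le
  · rintro x ⟨P, rfl⟩
    exact modularityOf_le_aux G d hd0 hreg hA lam hlam H1 H2 P
  · positivity

end
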